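/- arXiv:math/0511551 — 3 statements merged into one kernel-verified Lean document; each statement's English description precedes it below -/
import Mathlib

section
/- For all nonnegative integers μ, ν, λ and every integer s with μ < s ≤ μ+ν, setting k = μ+ν+λ, the following identity holds in ℚ: Σ_{q=0}^{ν} (−1)^q binom(ν,q) · ((ν+λ−q)!/(k+1−q)!) · binom(k+1−q, s) = 0. -/
open Finset fwdDiff

private lemma aux_fwdDiff_choose_add (lam j : ℕ) :
    fwdDiff 1 (fun x ↦ ((x + lam).choose (j + 1) : ℤ)) = fun x ↦ ((x + lam).choose j : ℤ) := by
  ext x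
  have h : x + 1 + lam = (x + lam) + 1 := by omega
  simp only [fwdDiff, h, Nat.choose_succ_succ' (x + lam) j]
  push_cast
  ring

private lemma aux_fwdDiff_iter_choose_add (lam d : ℕ) :
    (fwdDiff 1)^[d + 1] (fun x ↦ ((x + lam).choose d : ℤ)) = 0 := by
  induction d with
  | zero =>
    simp only [Nat.choose_zero_right, Nat.cast_one]
    ext x
    simp [fwdDiff]
  | succ d IH =>
    rw [Function.iterate_succ_apply, aux_fwdDiff_choose_add, IH]

private lemma key (ν d lam : ℕ) (hd : d < ν) :
    ∑ q ∈ Finset.range (ν + 1),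
      (-1 : ℤ) ^ q * (ν.choose q : ℤ) * ((ν + lam - q).choose d : ℤ) = 0 := by
  rw [← Finset.sum_range_reflect]
  have hshift := fwdDiff_iter_eq_sum_shift (1 : ℕ) (fun x ↦ ((x + lam).choose d : ℤ)) ν 0
  have hzero : (fwdDiff 1)^[ν] (fun x : ℕ ↦ ((x + lam).choose d : ℤ)) 0 = 0 := by
    obtain ⟨a, rfl⟩ : ∃ a, ν = a + (d + 1) := ⟨ν - (d + 1), by omega⟩
    rw [Function.iterate_add_apply, aux_fwdDiff_iter_choose_add]
    have : (fwdDiff 1)^[a] (0 : ℕ → ℤ) = 0 := by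
      apply Function.iterate_fixed
      ext x; simp [fwdDiff]
    rw [this]
    rfl
  rw [hzero] at hshift
  simp only [smul_eq_mul, mul_one, zero_add] at hshift
  refine Eq.trans ?_ hshift.symm
  apply Finset.sum_congr rfl
  intro j hj
  rw [Finset.mem_range] at hj
  have hj' : j ≤ ν := by omega
  have h1 : ν + 1 - 1 - j = ν - j := by omega
  have h2 : ν + lam - (ν - j) = j + lam := by omega
  have h3 : ν.choose (ν - j) = ν.choose j := Nat.choose_symm hj'
  rw [h1, h2, h3]

/-- For nonnegative integers `μ, ν, λ` and `μ < s ≤ μ+ν`, with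
`k = μ+ν+λ`: `Σ_{q=0}^{ν} (-1)^q C(ν,q) ((ν+λ-q)!/(k+1-q)!) C(k+1-q, s) = 0` in `ℚ`. -/
theorem d1_vanishes_middle_range (μ ν lam s : ℕ) (h1 : μ < s) (h2 : s ≤ μ + ν) :
    ∑ q ∈ Finset.range (ν + 1),
      (-1 : ℚ) ^ q * (Nat.choose ν q : ℚ) *
        ((Nat.factorial (ν + lam - q) : ℚ) / (Nat.factorial (μ + ν + lam + 1 - q) : ℚ)) *
        (Nat.choose (μ + ν + lam + 1 - q) s : ℚ) = 0 := by
  set d : ℕ := s - (μ + 1) with hd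
  have hs : s = μ + 1 + d := by omega
  have hdν : d < ν := by omega
  have hterm : ∀ q ∈ Finset.range (ν + 1),
      (-1 : ℚ) ^ q * (Nat.choose ν q : ℚ) *
        ((Nat.factorial (ν + lam - q) : ℚ) / (Nat.factorial (μ + ν + lam + 1 - q) : ℚ)) *
        (Nat.choose (μ + ν + lam + 1 - q) s : ℚ)
      = ((Nat.factorial d : ℚ) / (Nat.factorial s : ℚ)) *
        ((-1 : ℚ) ^ q * (Nat.choose ν q : ℚ) * (Nat.choose (ν + lam - q) d : ℚ)) := by
    intro q hq
    rw [Finset.mem_range] at hq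
    have hqν : q ≤ ν := by omega
    set A : ℕ := ν + lam - q with hA
    have hK : μ + ν + lam + 1 - q = A + μ + 1 := by omega
    rw [hK]
    suffices h : ((Nat.factorial A : ℚ) / (Nat.factorial (A + μ + 1) : ℚ)) *
        (Nat.choose (A + μ + 1) s : ℚ)
        = ((Nat.factorial d : ℚ) / (Nat.factorial s : ℚ)) * (Nat.choose A d : ℚ) by
      rw [mul_assoc, h]; ring
    by_cases hcase : d ≤ A
    · have hsle : s ≤ A + μ + 1 := by omega
      rw [Nat.cast_choose ℚ hsle, Nat.cast_choose ℚ hcase]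
      have hsub : A + μ + 1 - s = A - d := by omega
      rw [hsub]
      have f1 : (Nat.factorial (A + μ + 1) : ℚ) ≠ 0 := Nat.cast_ne_zero.2 (Nat.factorial_ne_zero _)
      have f2 : (Nat.factorial s : ℚ) ≠ 0 := Nat.cast_ne_zero.2 (Nat.factorial_ne_zero _)
      have f3 : (Nat.factorial (A - d) : ℚ) ≠ 0 := Nat.cast_ne_zero.2 (Nat.factorial_ne_zero _)
      have f4 : (Nat.factorial d : ℚ) ≠ 0 := Nat.cast_ne_zero.2 (Nat.factorial_ne_zero _)
      field_simp
    · have c1 : Nat.choose (A + μ + 1) s = 0 := Nat.choose_eq_zero_of_lt (by omega)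
      have c2 : Nat.choose A d = 0 := Nat.choose_eq_zero_of_lt (by omega)
      rw [c1, c2]
      simp
  rw [Finset.sum_congr rfl hterm, ← Finset.mul_sum]
  have hkey := key ν d lam hdν
  have hkeyQ : ∑ q ∈ Finset.range (ν + 1),
      (-1 : ℚ) ^ q * (Nat.choose ν q : ℚ) * (Nat.choose (ν + lam - q) d : ℚ) = 0 := by
    have := congrArg (fun z : ℤ ↦ (z : ℚ)) hkey
    push_cast at this
    convert this using 2
  rw [hkeyQ, mul_zero]
end

section
/- For all nonnegative integers μ, ν, λ and every integer s with 0 ≤ s ≤ μ, setting k = μ+ν+λ, the following identity holds in ℚ: Σ_{q=0}^{ν} (−1)^{ν+λ+1−q} · μ! · ((ν+λ−q)!/(k+1−q)!) · binom(ν,q) · binom(k+1−q, s) = (−1)^{λ+1} · λ! · ((μ+ν−s)!/(k+1−s)!) · binom(μ,s). -/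
open Finset

lemma factQ_ne (n : ℕ) : ((Nat.factorial n : ℚ)) ≠ 0 := by
  exact_mod_cast Nat.factorial_ne_zero n

noncomputable def Aux (m x : ℕ) : ℚ :=
  (Nat.factorial x : ℚ) / (Nat.factorial (x + m + 1) : ℚ)

lemma key_s12 (m ν : ℕ) : ∀ lam : ℕ,
    ∑ j ∈ range (ν + 1), (-1 : ℚ) ^ j * (Nat.choose ν j : ℚ) * Aux m (lam + j)
    = (Nat.factorial lam : ℚ) * (Nat.factorial (ν + m) : ℚ) /
        ((Nat.factorial m : ℚ) * (Nat.factorial (lam + ν + m + 1) : ℚ)) := by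
  induction ν with
  | zero =>
    intro lam
    simp only [Finset.sum_range_succ, Finset.sum_range_zero, Nat.choose_zero_right, Aux]
    push_cast
    rw [show lam + 0 = lam from rfl, show (0:ℕ) + m = m from by omega]
    field_simp
    ring
  | succ ν ih =>
    intro lam
    have hsplit : ∑ j ∈ range (ν + 2), (-1 : ℚ) ^ j * (Nat.choose (ν+1) j : ℚ) * Aux m (lam + j)
        = (∑ i ∈ range (ν + 1), (-1 : ℚ) ^ (i+1) * (Nat.choose (ν+1) (i+1) : ℚ) * Aux m (lam + (i+1)))
          + Aux m lam := by
      rw [Finset.sum_range_succ']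
      simp
    have hterm : ∀ i ∈ range (ν + 1),
        (-1 : ℚ) ^ (i+1) * (Nat.choose (ν+1) (i+1) : ℚ) * Aux m (lam + (i+1))
        = (-((-1 : ℚ) ^ i * (Nat.choose ν i : ℚ) * Aux m ((lam+1) + i)))
          + (-((-1 : ℚ) ^ i * (Nat.choose ν (i+1) : ℚ) * Aux m (lam + (i+1)))) := by
      intro i _
      rw [Nat.choose_succ_succ, show lam + (i+1) = (lam+1) + i from by omega]
      push_cast
      ring
    -- W = ∑ i in range (ν+1), (-1)^i * C(ν,i+1) * Aux m (lam+(i+1))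
    have hW : ∑ i ∈ range (ν + 1), (-1 : ℚ) ^ i * (Nat.choose ν (i+1) : ℚ) * Aux m (lam + (i+1))
        = Aux m lam - ∑ j ∈ range (ν + 1), (-1 : ℚ) ^ j * (Nat.choose ν j : ℚ) * Aux m (lam + j) := by
      rw [Finset.sum_range_succ]
      simp only [Nat.choose_succ_self, Nat.cast_zero, mul_zero, zero_mul, mul_zero, add_zero]
      rw [eq_sub_iff_add_eq]
      rw [show (∑ j ∈ range (ν + 1), (-1 : ℚ) ^ j * (Nat.choose ν j : ℚ) * Aux m (lam + j))
          = (∑ i ∈ range ν, (-1 : ℚ) ^ (i+1) * (Nat.choose ν (i+1) : ℚ) * Aux m (lam + (i+1)))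
            + (-1:ℚ)^0 * (Nat.choose ν 0 : ℚ) * Aux m (lam + 0) from Finset.sum_range_succ' _ ν]
      simp only [pow_zero, Nat.choose_zero_right, Nat.cast_one, one_mul, mul_one, add_zero]
      have hz : (∑ x ∈ range ν, (-1:ℚ)^x * (Nat.choose ν (x+1) : ℚ) * Aux m (lam + (x+1)))
          + ∑ i ∈ range ν, (-1:ℚ)^(i+1) * (Nat.choose ν (i+1) : ℚ) * Aux m (lam + (i+1)) = 0 := by
        rw [← Finset.sum_add_distrib]
        apply Finset.sum_eq_zero
        intro i _
        ring
      linarith [hz]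
    rw [hsplit, Finset.sum_congr rfl hterm, Finset.sum_add_distrib,
        Finset.sum_neg_distrib, Finset.sum_neg_distrib, hW, ih (lam+1), ih lam]
    have e1 : lam + 1 + ν + m + 1 = lam + (ν+1) + m + 1 := by omega
    have e2 : ν + 1 + m = (ν + m) + 1 := by omega
    rw [e1, e2]
    have h1 := factQ_ne m
    have h2 := factQ_ne (lam + (ν+1) + m + 1)
    have h3 := factQ_ne lam
    have hrec1 : (Nat.factorial (lam + (ν+1) + m + 1) : ℚ)
        = (lam + ν + m + 2 : ℚ) * (Nat.factorial (lam + ν + m + 1) : ℚ) := by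
      rw [show lam + (ν+1) + m + 1 = (lam + ν + m + 1) + 1 from by omega, Nat.factorial_succ]
      push_cast; ring
    have hrec2 : (Nat.factorial ((ν + m) + 1) : ℚ)
        = (ν + m + 1 : ℚ) * (Nat.factorial (ν + m) : ℚ) := by
      rw [Nat.factorial_succ]; push_cast; ring
    have hrec3 : (Nat.factorial (lam + 1) : ℚ) = (lam + 1 : ℚ) * (Nat.factorial lam : ℚ) := by
      rw [Nat.factorial_succ]; push_cast; ring
    rw [hrec1, hrec2, hrec3]
    have h4 := factQ_ne (lam + ν + m + 1)
    field_simp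
    ring

/-- For nonnegative integers `μ, ν, λ` and `0 ≤ s ≤ μ`, with
`k = μ+ν+λ`: `Σ_{q=0}^{ν} (-1)^{ν+λ+1-q} μ! ((ν+λ-q)!/(k+1-q)!) C(ν,q) C(k+1-q, s)
= (-1)^{λ+1} λ! ((μ+ν-s)!/(k+1-s)!) C(μ,s)` in `ℚ` (the identity `d_{1,s} = -d_{3,s}`). -/
theorem d1_eq_neg_d3 (μ ν lam s : ℕ) (hs : s ≤ μ) :
    ∑ q ∈ Finset.range (ν + 1),
      (-1 : ℚ) ^ (ν + lam + 1 - q) * (Nat.factorial μ : ℚ) *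
        ((Nat.factorial (ν + lam - q) : ℚ) / (Nat.factorial (μ + ν + lam + 1 - q) : ℚ)) *
        (Nat.choose ν q : ℚ) * (Nat.choose (μ + ν + lam + 1 - q) s : ℚ)
    = (-1 : ℚ) ^ (lam + 1) * (Nat.factorial lam : ℚ) *
        ((Nat.factorial (μ + ν - s) : ℚ) / (Nat.factorial (μ + ν + lam + 1 - s) : ℚ)) *
        (Nat.choose μ s : ℚ) := by
  obtain ⟨m, rfl⟩ : ∃ m, μ = s + m := ⟨μ - s, by omega⟩
  rw [← Finset.sum_range_reflect]
  have hstep : ∀ j ∈ Finset.range (ν+1),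
      (-1 : ℚ) ^ (ν + lam + 1 - (ν + 1 - 1 - j)) * (Nat.factorial (s+m) : ℚ) *
        ((Nat.factorial (ν + lam - (ν + 1 - 1 - j)) : ℚ) /
          (Nat.factorial (s + m + ν + lam + 1 - (ν + 1 - 1 - j)) : ℚ)) *
        (Nat.choose ν (ν + 1 - 1 - j) : ℚ) *
        (Nat.choose (s + m + ν + lam + 1 - (ν + 1 - 1 - j)) s : ℚ)
      = ((-1:ℚ)^(lam+1) * (Nat.factorial (s+m) : ℚ) / (Nat.factorial s : ℚ)) *
          ((-1 : ℚ) ^ j * (Nat.choose ν j : ℚ) * Aux m (lam + j)) := by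
    intro j hj
    have hj' : j ≤ ν := Nat.lt_succ_iff.mp (Finset.mem_range.mp hj)
    rw [show ν + 1 - 1 - j = ν - j from by omega,
        show ν + lam + 1 - (ν - j) = lam + 1 + j from by omega,
        show ν + lam - (ν - j) = lam + j from by omega,
        show s + m + ν + lam + 1 - (ν - j) = (lam + j + m + 1) + s from by omega,
        Nat.choose_symm hj',
        Nat.cast_choose ℚ (show s ≤ (lam + j + m + 1) + s from by omega),
        show (lam + j + m + 1) + s - s = lam + j + m + 1 from by omega]
    unfold Aux
    rw [pow_add]
    have h1 := factQ_ne (lam + j + m + 1 + s)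
    have h2 := factQ_ne (lam + j + m + 1)
    have h3 := factQ_ne s
    field_simp
  rw [Finset.sum_congr rfl hstep, ← Finset.mul_sum, key_s12 m ν lam]
  rw [show s + m + ν - s = ν + m from by omega,
      show s + m + ν + lam + 1 - s = lam + ν + m + 1 from by omega,
      Nat.cast_choose ℚ (show s ≤ s + m from by omega),
      show s + m - s = m from by omega]
  have h1 := factQ_ne s
  have h2 := factQ_ne m
  have h3 := factQ_ne (lam + ν + m + 1)
  have h4 := factQ_ne (s + m)
  field_simp
end

section
/- For all nonnegative integers μ, ν, λ and every integer s with μ+ν < s ≤ k+1 where k = μ+ν+λ, the following identity holds in ℚ: Σ_{q=0}^{ν} (−1)^{ν+λ+1−q} · μ! · ((ν+λ−q)!/(k+1−q)!) · binom(ν,q) · binom(k+1−q, s) = Σ_{q=0}^{λ} (−1)^{ν+q+1} · ν! · ((λ+μ−q)!/(k+1−q)!) · binom(λ,q) · binom(q, k+1−s). -/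
open Finset Nat

/-- Summand of the first sum, with `n = ν + lam`, without the `C(ν,q)` factor. -/
def c1 (μ n s q : ℕ) : ℚ :=
  (-1 : ℚ) ^ (n + 1 - q) * (Nat.factorial μ : ℚ) *
    ((Nat.factorial (n - q) : ℚ) / (Nat.factorial (μ + n + 1 - q) : ℚ)) *
    (Nat.choose (μ + n + 1 - q) s : ℚ)

lemma c1_succ (μ n s q : ℕ) : c1 μ (n + 1) s (q + 1) = c1 μ n s q := by
  unfold c1
  have h1 : n + 1 + 1 - (q + 1) = n + 1 - q := by omega
  have h2 : n + 1 - (q + 1) = n - q := by omega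
  have h3 : μ + (n + 1) + 1 - (q + 1) = μ + n + 1 - q := by omega
  rw [h1, h2, h3]

lemma rec1 (μ ν n s : ℕ) :
    ∑ q ∈ range (ν + 2), c1 μ (n + 1) s q * (Nat.choose (ν + 1) q : ℚ)
      = ∑ q ∈ range (ν + 1), c1 μ (n + 1) s q * (Nat.choose ν q : ℚ)
        + ∑ q ∈ range (ν + 1), c1 μ n s q * (Nat.choose ν q : ℚ) := by
  rw [Finset.sum_range_succ' (fun q => c1 μ (n + 1) s q * (Nat.choose (ν + 1) q : ℚ)) (ν + 1)]
  have h : ∀ q ∈ range (ν + 1), c1 μ (n + 1) s (q + 1) * (Nat.choose (ν + 1) (q + 1) : ℚ)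
      = c1 μ n s q * (Nat.choose ν q : ℚ) + c1 μ (n + 1) s (q + 1) * (Nat.choose ν (q + 1) : ℚ) := by
    intro q _
    rw [Nat.choose_succ_succ, c1_succ]
    push_cast
    ring
  rw [Finset.sum_congr rfl h, Finset.sum_add_distrib]
  have h2 : (∑ q ∈ range (ν + 1), c1 μ (n + 1) s (q + 1) * (Nat.choose ν (q + 1) : ℚ))
        + c1 μ (n + 1) s 0 * (Nat.choose (ν + 1) 0 : ℚ)
      = ∑ q ∈ range (ν + 1), c1 μ (n + 1) s q * (Nat.choose ν q : ℚ) := by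
    have e := Finset.sum_range_succ' (fun q => c1 μ (n + 1) s q * (Nat.choose ν q : ℚ)) (ν + 1)
    have e2 := Finset.sum_range_succ (fun q => c1 μ (n + 1) s q * (Nat.choose ν q : ℚ)) (ν + 1)
    simp only [Nat.choose_succ_self, Nat.cast_zero, mul_zero, add_zero] at e2
    rw [e2] at e
    simp only [Nat.choose_zero_right, Nat.cast_one] at e ⊢
    linarith [e]
  linarith [h2]


/-- Vanishing when `s` is too large. -/
lemma S1_zero (μ ν n s : ℕ) (hs : μ + n + 1 < s) :
    ∑ q ∈ range (ν + 1), c1 μ n s q * (Nat.choose ν q : ℚ) = 0 := by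
  apply Finset.sum_eq_zero
  intro q _
  have : Nat.choose (μ + n + 1 - q) s = 0 :=
    Nat.choose_eq_zero_of_lt (by omega)
  unfold c1
  rw [this]
  push_cast
  ring

lemma lemA (μ : ℕ) : ∀ ν lam b : ℕ, b ≤ lam →
    ∑ q ∈ range (ν + 1), c1 μ (ν + lam) (μ + ν + 1 + b) q * (Nat.choose ν q : ℚ)
      = (-1 : ℚ) ^ (ν + lam + 1) * (Nat.factorial μ : ℚ) * (Nat.factorial (ν + b) : ℚ)
        * (Nat.choose lam b : ℚ) / (Nat.factorial (μ + ν + 1 + b) : ℚ) := by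
  intro ν
  induction ν with
  | zero =>
    intro lam b hb
    rw [Finset.sum_range_one]
    unfold c1
    simp only [Nat.zero_add, Nat.sub_zero, Nat.add_zero, Nat.choose_self, Nat.cast_one, mul_one]
    rw [Nat.cast_choose ℚ (show μ + 1 + b ≤ μ + lam + 1 by omega),
      Nat.cast_choose ℚ hb]
    rw [show μ + lam + 1 - (μ + 1 + b) = lam - b from by omega]
    have h1 : (Nat.factorial (μ + lam + 1) : ℚ) ≠ 0 := by
      exact_mod_cast Nat.factorial_ne_zero _
    have h2 : (Nat.factorial (μ + 1 + b) : ℚ) ≠ 0 := by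
      exact_mod_cast Nat.factorial_ne_zero _
    have h3 : (Nat.factorial (lam - b) : ℚ) ≠ 0 := by
      exact_mod_cast Nat.factorial_ne_zero _
    have h4 : (Nat.factorial b : ℚ) ≠ 0 := by exact_mod_cast Nat.factorial_ne_zero _
    field_simp
  | succ ν ih =>
    intro lam b hb
    have e0 : ν + 1 + lam = ν + lam + 1 := by omega
    have e2 : μ + (ν + 1) + 1 + b = μ + ν + 1 + (b + 1) := by omega
    have er : ν + 1 + 1 = ν + 2 := by omega
    rw [e0, e2, er, rec1 μ ν (ν + lam) (μ + ν + 1 + (b + 1))]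
    have e1 : ν + lam + 1 = ν + (lam + 1) := by omega
    rw [e1, ih (lam + 1) (b + 1) (by omega)]
    by_cases hbl : b < lam
    · rw [ih lam (b + 1) (by omega)]
      rw [Nat.choose_succ_succ lam b]
      push_cast
      rw [show ν + (b + 1) = ν + 1 + b from by omega]
      ring
    · have hble : b = lam := by omega
      subst hble
      rw [S1_zero μ ν (ν + b) (μ + ν + 1 + (b + 1)) (by omega)]
      simp only [Nat.choose_self, Nat.cast_one, mul_one, add_zero]
      rw [show ν + (b + 1) = ν + 1 + b from by omega]

/-- Summand of lemma B without the `C(b,r)` factor. -/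
def d2 (μ ν m r : ℕ) : ℚ :=
  (-1 : ℚ) ^ r * ((Nat.factorial (μ + m - r) : ℚ) / (Nat.factorial (μ + ν + 1 + m - r) : ℚ))

lemma d2_succ (μ ν m r : ℕ) : d2 μ ν (m + 1) (r + 1) = -(d2 μ ν m r) := by
  unfold d2
  have h1 : μ + (m + 1) - (r + 1) = μ + m - r := by omega
  have h2 : μ + ν + 1 + (m + 1) - (r + 1) = μ + ν + 1 + m - r := by omega
  rw [h1, h2, pow_succ]
  ring

lemma d2_mu (μ ν m r : ℕ) : d2 (μ + 1) ν m r = d2 μ ν (m + 1) r := by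
  unfold d2
  have h1 : μ + 1 + m - r = μ + (m + 1) - r := by omega
  have h2 : μ + 1 + ν + 1 + m - r = μ + ν + 1 + (m + 1) - r := by omega
  rw [h1, h2]

lemma recB (μ ν b : ℕ) :
    ∑ r ∈ range (b + 2), d2 μ ν (b + 1) r * (Nat.choose (b + 1) r : ℚ)
      = ∑ r ∈ range (b + 1), d2 (μ + 1) ν b r * (Nat.choose b r : ℚ)
        - ∑ r ∈ range (b + 1), d2 μ ν b r * (Nat.choose b r : ℚ) := by
  rw [Finset.sum_range_succ' (fun r => d2 μ ν (b + 1) r * (Nat.choose (b + 1) r : ℚ)) (b + 1)]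
  have h : ∀ r ∈ range (b + 1), d2 μ ν (b + 1) (r + 1) * (Nat.choose (b + 1) (r + 1) : ℚ)
      = -(d2 μ ν b r * (Nat.choose b r : ℚ)) + d2 μ ν (b + 1) (r + 1) * (Nat.choose b (r + 1) : ℚ) := by
    intro r _
    rw [Nat.choose_succ_succ]
    have := d2_succ μ ν b r
    push_cast
    rw [this]
    ring
  rw [Finset.sum_congr rfl h, Finset.sum_add_distrib]
  have h2 : (∑ r ∈ range (b + 1), d2 μ ν (b + 1) (r + 1) * (Nat.choose b (r + 1) : ℚ))
        + d2 μ ν (b + 1) 0 * (Nat.choose (b + 1) 0 : ℚ)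
      = ∑ r ∈ range (b + 1), d2 μ ν (b + 1) r * (Nat.choose b r : ℚ) := by
    have e := Finset.sum_range_succ' (fun r => d2 μ ν (b + 1) r * (Nat.choose b r : ℚ)) (b + 1)
    have e2 := Finset.sum_range_succ (fun r => d2 μ ν (b + 1) r * (Nat.choose b r : ℚ)) (b + 1)
    simp only [Nat.choose_succ_self, Nat.cast_zero, mul_zero, add_zero] at e2
    rw [e2] at e
    simp only [Nat.choose_zero_right, Nat.cast_one] at e ⊢
    linarith [e]
  have h3 : ∀ r ∈ range (b + 1), d2 (μ + 1) ν b r * (Nat.choose b r : ℚ)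
      = d2 μ ν (b + 1) r * (Nat.choose b r : ℚ) := by
    intro r _
    rw [d2_mu]
  rw [Finset.sum_congr rfl h3, Finset.sum_neg_distrib]
  linarith [h2]

lemma lemB (ν : ℕ) : ∀ b μ : ℕ,
    ∑ r ∈ range (b + 1), d2 μ ν b r * (Nat.choose b r : ℚ)
      = (-1 : ℚ) ^ b * (Nat.factorial μ : ℚ) * (Nat.factorial (ν + b) : ℚ)
        / ((Nat.factorial ν : ℚ) * (Nat.factorial (μ + ν + 1 + b) : ℚ)) := by
  intro b
  induction b with
  | zero =>
    intro μ
    rw [Finset.sum_range_one]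
    unfold d2
    norm_num
    have h1 : (Nat.factorial (μ + ν + 1) : ℚ) ≠ 0 := by
      exact_mod_cast Nat.factorial_ne_zero _
    have h2 : (Nat.factorial ν : ℚ) ≠ 0 := by exact_mod_cast Nat.factorial_ne_zero _
    field_simp
  | succ b ih =>
    intro μ
    rw [recB μ ν b, ih (μ + 1), ih μ]
    have e1 : μ + 1 + ν + 1 + b = μ + ν + 1 + b + 1 := by omega
    have e2 : μ + ν + 1 + (b + 1) = μ + ν + 1 + b + 1 := by omega
    have e3 : ν + (b + 1) = ν + b + 1 := by omega
    rw [e1, e2, e3, Nat.factorial_succ (μ + ν + 1 + b), Nat.factorial_succ (ν + b),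
      Nat.factorial_succ μ]
    have hf : (Nat.factorial (μ + ν + 1 + b) : ℚ) ≠ 0 := by
      exact_mod_cast Nat.factorial_ne_zero _
    have hν : (Nat.factorial ν : ℚ) ≠ 0 := by exact_mod_cast Nat.factorial_ne_zero _
    have hx : ((μ + ν + 1 + b : ℕ) : ℚ) + 1 ≠ 0 := by positivity
    push_cast
    field_simp
    ring

/-- Summand of the second sum. -/
def g2 (μ ν lam t q : ℕ) : ℚ :=
  (-1 : ℚ) ^ (ν + q + 1) * (Nat.factorial ν : ℚ) *
    ((Nat.factorial (lam + μ - q) : ℚ) / (Nat.factorial (μ + ν + lam + 1 - q) : ℚ)) *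
    (Nat.choose lam q : ℚ) * (Nat.choose q t : ℚ)

lemma RHS_eval (μ ν lam b : ℕ) (hb : b ≤ lam) :
    ∑ q ∈ range (lam + 1), g2 μ ν lam (lam - b) q
      = (-1 : ℚ) ^ (ν + lam + 1) * (Nat.factorial μ : ℚ) * (Nat.factorial (ν + b) : ℚ)
        * (Nat.choose lam b : ℚ) / (Nat.factorial (μ + ν + 1 + b) : ℚ) := by
  have step1 : ∑ q ∈ range (lam + 1), g2 μ ν lam (lam - b) q
      = ∑ q ∈ Finset.Ico (lam - b) (lam + 1), g2 μ ν lam (lam - b) q := by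
    refine (Finset.sum_subset ?_ ?_).symm
    · intro x hx
      rw [Finset.mem_Ico] at hx
      rw [Finset.mem_range]
      omega
    · intro x hx hnx
      rw [Finset.mem_range] at hx
      rw [Finset.mem_Ico] at hnx
      have hxlt : x < lam - b := by omega
      have h0 : Nat.choose x (lam - b) = 0 := Nat.choose_eq_zero_of_lt hxlt
      unfold g2
      rw [h0]
      push_cast
      ring
  rw [step1, Finset.sum_Ico_eq_sum_range,
    show lam + 1 - (lam - b) = b + 1 from by omega]
  have step2 : ∀ r ∈ range (b + 1), g2 μ ν lam (lam - b) (lam - b + r)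
      = ((-1 : ℚ) ^ (ν + (lam - b) + 1) * (Nat.factorial ν : ℚ)
          * (Nat.choose lam (lam - b) : ℚ)) * (d2 μ ν b r * (Nat.choose b r : ℚ)) := by
    intro r hr
    rw [Finset.mem_range] at hr
    have hc := Nat.choose_mul (n := lam)
      (show lam - b ≤ lam - b + r by omega)
    rw [show lam - (lam - b) = b from by omega,
      show lam - b + r - (lam - b) = r from by omega] at hc
    have hcq : (Nat.choose lam (lam - b + r) : ℚ) * (Nat.choose (lam - b + r) (lam - b) : ℚ)
        = (Nat.choose lam (lam - b) : ℚ) * (Nat.choose b r : ℚ) := by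
      exact_mod_cast congrArg (Nat.cast : ℕ → ℚ) hc
    unfold g2 d2
    rw [show lam + μ - (lam - b + r) = μ + b - r from by omega,
      show μ + ν + lam + 1 - (lam - b + r) = μ + ν + 1 + b - r from by omega,
      show ν + (lam - b + r) + 1 = (ν + (lam - b) + 1) + r from by omega, pow_add]
    linear_combination ((-1 : ℚ) ^ (ν + (lam - b) + 1) * (-1 : ℚ) ^ r
      * (Nat.factorial ν : ℚ)
      * ((Nat.factorial (μ + b - r) : ℚ) / (Nat.factorial (μ + ν + 1 + b - r) : ℚ))) * hcq
  rw [Finset.sum_congr rfl step2, ← Finset.mul_sum, lemB ν b μ, Nat.choose_symm hb]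
  have hν : (Nat.factorial ν : ℚ) ≠ 0 := by exact_mod_cast Nat.factorial_ne_zero _
  rw [show ν + (lam - b) + 1 = ν + lam + 1 - b from by omega]
  have hpow : (-1 : ℚ) ^ (ν + lam + 1 - b) * (-1 : ℚ) ^ b = (-1 : ℚ) ^ (ν + lam + 1) := by
    rw [← pow_add, show ν + lam + 1 - b + b = ν + lam + 1 from by omega]
  field_simp
  linear_combination (Nat.choose lam b : ℚ) * hpow

/-- For nonnegative integers `μ, ν, λ` and `μ+ν < s ≤ k+1`, with
`k = μ+ν+λ`: `Σ_{q=0}^{ν} (-1)^{ν+λ+1-q} μ! ((ν+λ-q)!/(k+1-q)!) C(ν,q) C(k+1-q, s)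
= Σ_{q=0}^{λ} (-1)^{ν+q+1} ν! ((λ+μ-q)!/(k+1-q)!) C(λ,q) C(q, k+1-s)` in `ℚ`
(the identity `d_{1,s} = -d_{2,s}`). -/
theorem d1_eq_neg_d2 (μ ν lam s : ℕ) (h1 : μ + ν < s) (h2 : s ≤ μ + ν + lam + 1) :
    ∑ q ∈ Finset.range (ν + 1),
      (-1 : ℚ) ^ (ν + lam + 1 - q) * (Nat.factorial μ : ℚ) *
        ((Nat.factorial (ν + lam - q) : ℚ) / (Nat.factorial (μ + ν + lam + 1 - q) : ℚ)) *
        (Nat.choose ν q : ℚ) * (Nat.choose (μ + ν + lam + 1 - q) s : ℚ)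
    = ∑ q ∈ Finset.range (lam + 1),
      (-1 : ℚ) ^ (ν + q + 1) * (Nat.factorial ν : ℚ) *
        ((Nat.factorial (lam + μ - q) : ℚ) / (Nat.factorial (μ + ν + lam + 1 - q) : ℚ)) *
        (Nat.choose lam q : ℚ) * (Nat.choose q (μ + ν + lam + 1 - s) : ℚ) := by
  obtain ⟨b, hb, rfl⟩ : ∃ b, b ≤ lam ∧ s = μ + ν + 1 + b :=
    ⟨s - μ - ν - 1, by omega, by omega⟩
  have HL : ∑ q ∈ Finset.range (ν + 1),
      (-1 : ℚ) ^ (ν + lam + 1 - q) * (Nat.factorial μ : ℚ) *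
        ((Nat.factorial (ν + lam - q) : ℚ) / (Nat.factorial (μ + ν + lam + 1 - q) : ℚ)) *
        (Nat.choose ν q : ℚ) * (Nat.choose (μ + ν + lam + 1 - q) (μ + ν + 1 + b) : ℚ)
      = ∑ q ∈ range (ν + 1), c1 μ (ν + lam) (μ + ν + 1 + b) q * (Nat.choose ν q : ℚ) := by
    refine Finset.sum_congr rfl fun q _ => ?_
    unfold c1
    rw [show μ + (ν + lam) + 1 = μ + ν + lam + 1 from by omega]
    ring
  have HR : ∑ q ∈ Finset.range (lam + 1),
      (-1 : ℚ) ^ (ν + q + 1) * (Nat.factorial ν : ℚ) *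
        ((Nat.factorial (lam + μ - q) : ℚ) / (Nat.factorial (μ + ν + lam + 1 - q) : ℚ)) *
        (Nat.choose lam q : ℚ) * (Nat.choose q (μ + ν + lam + 1 - (μ + ν + 1 + b)) : ℚ)
      = ∑ q ∈ range (lam + 1), g2 μ ν lam (lam - b) q := by
    refine Finset.sum_congr rfl fun q _ => ?_
    unfold g2
    rw [show μ + ν + lam + 1 - (μ + ν + 1 + b) = lam - b from by omega]
  rw [HL, HR, lemA μ ν lam b hb, RHS_eval μ ν lam b hb]
end
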